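/- A permutation σ satisfies: s(σ) avoids 321 if and only if σ avoids all three patterns 34251, 35241, and 45231. That is, s^{-1}(Av(321)) = Av(34251, 35241, 45231). -/

import Mathlib

/-- West's stack-sorting map, implemented with fuel (fuel = length suffices). -/
def ssAux : ℕ → List ℕ → List ℕ
  | 0, _ => []
  | _ + 1, [] => []
  | fuel + 1, l =>
    let m := l.foldr max 0
    let i := l.idxOf m
    ssAux fuel (l.take i) ++ ssAux fuel (l.drop (i + 1)) ++ [m]

/-- West's stack-sorting map `s`. -/
def stackSort (l : List ℕ) : List ℕ := ssAux l.length l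

/-- `σ` contains the classical pattern `τ`. -/
def Contains (τ σ : List ℕ) : Prop :=
  ∃ f : Fin τ.length → Fin σ.length, StrictMono f ∧
    ∀ i j : Fin τ.length, τ.get i < τ.get j ↔ σ.get (f i) < σ.get (f j)

/-- `σ` avoids the classical pattern `τ`. -/
def Avoids (σ τ : List ℕ) : Prop := ¬ Contains τ σ

open List

lemma ssAux_cons (fuel : ℕ) (a : ℕ) (t : List ℕ) :
    ssAux (fuel + 1) (a :: t) =
      ssAux fuel ((a :: t).take ((a :: t).idxOf ((a :: t).foldr max 0)))
        ++ ssAux fuel ((a :: t).drop ((a :: t).idxOf ((a :: t).foldr max 0) + 1))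
        ++ [(a :: t).foldr max 0] := rfl

lemma foldr_max_le {l : List ℕ} {x : ℕ} (hx : x ∈ l) : x ≤ l.foldr max 0 := by
  induction l with
  | nil => simp at hx
  | cons a t ih =>
    rcases List.mem_cons.1 hx with rfl | h
    · exact le_max_left _ _
    · exact le_trans (ih h) (le_max_right _ _)

lemma foldr_max_mem {l : List ℕ} (h : l ≠ []) : l.foldr max 0 ∈ l := by
  induction l with
  | nil => simp at h
  | cons a t ih =>
    rcases t.eq_nil_or_concat with rfl | _
    · simp
    · have ht : t ≠ [] := by rintro rfl; simp_all
      rcases le_total a (t.foldr max 0) with h1 | h1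
      · simp only [List.foldr_cons, max_eq_right h1]
        exact List.mem_cons_of_mem _ (ih ht)
      · simp only [List.foldr_cons, max_eq_left h1]
        exact List.mem_cons_self

section decomp
variable {l : List ℕ}

lemma indexOf_lt (h : l ≠ []) : l.idxOf (l.foldr max 0) < l.length :=
  List.idxOf_lt_length_iff.2 (foldr_max_mem h)

lemma decomp (h : l ≠ []) :
    l = l.take (l.idxOf (l.foldr max 0)) ++ (l.foldr max 0) ::
        l.drop (l.idxOf (l.foldr max 0) + 1) := by
  have hi := indexOf_lt h
  conv_lhs => rw [← List.take_append_drop (l.idxOf (l.foldr max 0)) l]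
  rw [List.drop_eq_getElem_cons hi]
  congr 2
  exact List.getElem_idxOf hi

lemma take_len_le (h : l ≠ []) :
    (l.take (l.idxOf (l.foldr max 0))).length ≤ l.length - 1 := by
  have hi := indexOf_lt h
  simp only [List.length_take]
  omega

lemma drop_len_le (h : l ≠ []) :
    (l.drop (l.idxOf (l.foldr max 0) + 1)).length ≤ l.length - 1 := by
  simp only [List.length_drop]
  omega

end decomp

lemma ssAux_eq_stackSort : ∀ fuel (l : List ℕ), l.length ≤ fuel → ssAux fuel l = stackSort l := by
  intro fuel
  induction fuel using Nat.strong_induction_on with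
  | _ fuel ih =>
    intro l hl
    match fuel, l with
    | 0, [] => rfl
    | f + 1, [] => rfl
    | f + 1, a :: t =>
      have hne : (a :: t) ≠ [] := by simp
      have h1 := take_len_le hne
      have h2 := drop_len_le hne
      simp only [List.length_cons] at hl h1 h2
      rw [ssAux_cons]
      rw [ih f (by omega) _ (by omega), ih f (by omega) _ (by omega)]
      show _ = ssAux (t.length + 1) (a :: t)
      rw [ssAux_cons]
      rw [ih t.length (by omega) _ (by omega), ih t.length (by omega) _ (by omega)]

lemma stackSort_decomp {l : List ℕ} (h : l ≠ []) :
    stackSort l = stackSort (l.take (l.idxOf (l.foldr max 0)))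
      ++ stackSort (l.drop (l.idxOf (l.foldr max 0) + 1)) ++ [l.foldr max 0] := by
  match l with
  | a :: t =>
    have hne : (a :: t) ≠ [] := by simp
    have h1 := take_len_le hne
    have h2 := drop_len_le hne
    simp only [List.length_cons] at h1 h2
    show ssAux (t.length + 1) (a :: t) = _
    rw [ssAux_cons, ssAux_eq_stackSort _ _ (by omega), ssAux_eq_stackSort _ _ (by omega)]

lemma stackSort_perm_aux : ∀ (N : ℕ) (l : List ℕ), l.length ≤ N → (stackSort l).Perm l := by
  intro N
  induction N with
  | zero =>
    intro l hl
    rw [List.length_eq_zero_iff.1 (Nat.le_zero.1 hl)]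
    rfl
  | succ N ih =>
    intro l hl
    rcases eq_or_ne l [] with rfl | h
    · rfl
    · have h1 := take_len_le h
      have h2 := drop_len_le h
      have hlen : 1 ≤ l.length := List.length_pos_iff.2 h
      rw [stackSort_decomp h]
      have p1 := ih (l.take (l.idxOf (l.foldr max 0))) (by omega)
      have p2 := ih (l.drop (l.idxOf (l.foldr max 0) + 1)) (by omega)
      refine ((p1.append p2).append (List.Perm.refl _)).trans ?_
      conv_rhs => rw [decomp h]
      rw [List.append_assoc]
      exact (List.Perm.refl _).append List.perm_append_comm

lemma stackSort_perm (l : List ℕ) : (stackSort l).Perm l := stackSort_perm_aux l.length l le_rfl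

lemma mem_stackSort {l : List ℕ} {x : ℕ} : x ∈ stackSort l ↔ x ∈ l :=
  (stackSort_perm l).mem_iff

lemma stackSort_nodup {l : List ℕ} (h : l.Nodup) : (stackSort l).Nodup :=
  ((stackSort_perm l).nodup_iff).2 h

lemma sublist_append_last {L R l : List ℕ} {x : ℕ} (hnd : (L ++ R).Nodup) (hx : x ∈ L)
    (h : (l ++ [x]) <+ L ++ R) : (l ++ [x]) <+ L := by
  rw [List.sublist_append_iff] at h
  obtain ⟨l₁, l₂, he, h1, h2⟩ := h
  rcases eq_or_ne l₂ [] with rfl | hne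
  · rw [List.append_nil] at he; rwa [he]
  · exfalso
    obtain ⟨w, c, rfl⟩ := l₂.eq_nil_or_concat.resolve_left hne
    rw [List.concat_eq_append] at he h2
    rw [← List.append_assoc] at he
    obtain ⟨-, hc⟩ := List.append_inj' he rfl
    have : x ∈ w ++ [c] := by
      simp [List.cons_eq_cons.1 hc |>.1.symm]
    exact (List.disjoint_of_nodup_append hnd) hx (h2.mem this)

lemma cons_sublist_of_mem_right {L R l : List ℕ} {x : ℕ} (hnd : (L ++ R).Nodup) (hx : x ∈ R)
    (h : (x :: l) <+ L ++ R) : (x :: l) <+ R := by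
  rw [List.sublist_append_iff] at h
  obtain ⟨l₁, l₂, he, h1, h2⟩ := h
  rcases eq_or_ne l₁ [] with rfl | hne
  · rw [List.nil_append] at he; rwa [he]
  · exfalso
    obtain ⟨a, t, rfl⟩ := List.exists_cons_of_ne_nil hne
    rw [List.cons_append, List.cons_eq_cons] at he
    exact (List.disjoint_of_nodup_append hnd) (h1.mem (he.1 ▸ List.mem_cons_self)) hx

lemma cons_sublist_of_ne {x a : ℕ} {l t : List ℕ} (h : x :: l <+ a :: t) (hne : x ≠ a) :
    x :: l <+ t := by
  cases h with
  | cons _ h => exact h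
  | cons_cons _ h => exact absurd rfl hne

lemma sublist_splice {σ l₁ l₂ : List ℕ} {b : ℕ} (hnd : σ.Nodup) (hb1 : b ∉ l₁) (hb2 : b ∉ l₂)
    (h1 : l₁ ++ [b] <+ σ) (h2 : b :: l₂ <+ σ) : l₁ ++ b :: l₂ <+ σ := by
  have hbσ : b ∈ σ := h1.mem (by simp)
  obtain ⟨P, Q, rfl⟩ := List.append_of_mem hbσ
  have hbP : b ∉ P := fun hb => (List.disjoint_of_nodup_append hnd) hb (List.mem_cons_self)
  have hbQ : b ∉ Q := by
    have := (hnd.of_append_right)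
    exact (List.nodup_cons.1 this).1
  -- h1 : l₁ ++ [b] <+ P ++ b :: Q  gives l₁ <+ P
  have hl₁ : l₁ <+ P := by
    rw [List.sublist_append_iff] at h1
    obtain ⟨u, v, he, hu, hv⟩ := h1
    have hbu : b ∉ u := fun hb => hbP (hu.mem hb)
    have hbv : b ∈ v := by
      have : b ∈ u ++ v := he ▸ (by simp)
      rcases List.mem_append.1 this with h | h
      · exact absurd h hbu
      · exact h
    obtain ⟨w, c, rfl⟩ := v.eq_nil_or_concat.resolve_left (by rintro rfl; simp at hbv)
    rw [List.concat_eq_append] at he hv hbv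
    rw [← List.append_assoc] at he
    obtain ⟨he2, hc⟩ := List.append_inj' he rfl
    have hcb : c = b := (List.cons_eq_cons.1 hc).1.symm
    subst hcb
    have hw : w = [] := by
      rcases eq_or_ne w [] with rfl | hw
      · rfl
      · exfalso
        obtain ⟨d, w', rfl⟩ := List.exists_cons_of_ne_nil hw
        rw [List.cons_append] at hv
        cases hv with
        | cons _ h => exact hbQ (h.mem (by simp))
        | cons_cons _ h => exact hbQ (h.mem (by simp))
    subst hw
    rw [List.append_nil] at he2
    rw [← he2] at hu
    exact hu
  have hl₂ : l₂ <+ Q := by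
    have := cons_sublist_of_mem_right hnd (List.mem_cons_self) h2
    cases this with
    | cons _ h => exact absurd (h.mem (by simp)) hbQ
    | cons_cons _ h => exact h
  exact List.Sublist.append hl₁ (List.Sublist.cons₂ _ hl₂)

lemma decomp_bundle (σ : List ℕ) (hne : σ ≠ []) :
    ∃ L R : List ℕ, ∃ m : ℕ, σ = L ++ m :: R ∧
      stackSort σ = stackSort L ++ stackSort R ++ [m] ∧
      L.length ≤ σ.length - 1 ∧ R.length ≤ σ.length - 1 ∧ ∀ a ∈ σ, a ≤ m :=
  ⟨_, _, _, decomp hne, stackSort_decomp hne, take_len_le hne, drop_len_le hne,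
    fun _ ha => foldr_max_le ha⟩

def SepB (l : List ℕ) (x y : ℕ) : Prop := ∃ z, x < z ∧ y < z ∧ [x, z, y] <+ l

lemma sepB_left {L R : List ℕ} {m x y : ℕ} (hnd : (L ++ m :: R).Nodup) (hy : y ∈ L) :
    SepB (L ++ m :: R) x y ↔ SepB L x y := by
  constructor
  · rintro ⟨z, h1, h2, hs⟩
    exact ⟨z, h1, h2, sublist_append_last (l := [x, z]) hnd hy hs⟩
  · rintro ⟨z, h1, h2, hs⟩
    exact ⟨z, h1, h2, hs.trans (List.sublist_append_left _ _)⟩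

lemma sepB_right {L R : List ℕ} {m x y : ℕ} (hnd : (L ++ m :: R).Nodup) (hx : x ∈ R)
    (hxm : x ≠ m) : SepB (L ++ m :: R) x y ↔ SepB R x y := by
  constructor
  · rintro ⟨z, h1, h2, hs⟩
    exact ⟨z, h1, h2, cons_sublist_of_ne (cons_sublist_of_mem_right hnd
      (List.mem_cons_of_mem _ hx) hs) hxm⟩
  · rintro ⟨z, h1, h2, hs⟩
    exact ⟨z, h1, h2, (hs.trans (List.sublist_cons_self _ _)).trans
      (List.sublist_append_right _ _)⟩

lemma before_aux : ∀ (N : ℕ) (σ : List ℕ), σ.length ≤ N → σ.Nodup →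
    ∀ x y : ℕ, x ∈ σ → y ∈ σ → x ≠ y →
    ([x, y] <+ stackSort σ ↔ SepB σ x y ∨ (¬ SepB σ x y ∧ ¬ SepB σ y x ∧ x < y)) := by
  intro N
  induction N with
  | zero =>
    intro σ hl _ x y hx _ _
    rw [List.length_eq_zero_iff.1 (Nat.le_zero.1 hl)] at hx
    simp at hx
  | succ N ih =>
    intro σ hl hnd x y hx hy hxy
    have hne : σ ≠ [] := by rintro rfl; simp at hx
    have hlen : 1 ≤ σ.length := List.length_pos_iff.2 hne
    obtain ⟨L, R, m, hdec, hstack, h1, h2, hub⟩ := decomp_bundle σ hne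
    have hnd' : (L ++ m :: R).Nodup := hdec ▸ hnd
    have hdisj : L.Disjoint (m :: R) := List.disjoint_of_nodup_append hnd'
    have hmL : m ∉ L := fun hmem => hdisj hmem (List.mem_cons_self)
    have hmR : m ∉ R := (List.nodup_cons.1 hnd'.of_append_right).1
    have hmemL : ∀ a ∈ L, a ∈ σ := fun a ha => hdec ▸ List.mem_append_left _ ha
    have hmemR : ∀ a ∈ R, a ∈ σ :=
      fun a ha => hdec ▸ List.mem_append_right _ (List.mem_cons_of_mem _ ha)
    have hltL : ∀ a ∈ L, a < m := fun a ha =>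
      lt_of_le_of_ne (hub a (hmemL a ha)) (fun h => hmL (h ▸ ha))
    have hltR : ∀ a ∈ R, a < m := fun a ha =>
      lt_of_le_of_ne (hub a (hmemR a ha)) (fun h => hmR (h ▸ ha))
    have hndS : (stackSort L ++ (stackSort R ++ [m])).Nodup := by
      have h := stackSort_nodup hnd
      rw [hstack, List.append_assoc] at h
      exact h
    have hx' : x ∈ L ∨ x = m ∨ x ∈ R := by rw [hdec] at hx; simpa using hx
    have hy' : y ∈ L ∨ y = m ∨ y ∈ R := by rw [hdec] at hy; simpa using hy
    rcases hx' with hxL | rfl | hxR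
    · -- x ∈ L
      rcases hy' with hyL | rfl | hyR
      · -- both in L
        have e1 : SepB σ x y ↔ SepB L x y := by rw [hdec]; exact sepB_left hnd' hyL
        have e2 : SepB σ y x ↔ SepB L y x := by rw [hdec]; exact sepB_left hnd' hxL
        have e3 : [x, y] <+ stackSort σ ↔ [x, y] <+ stackSort L := by
          constructor
          · intro hs
            rw [hstack, List.append_assoc] at hs
            exact sublist_append_last (l := [x]) hndS (mem_stackSort.2 hyL) hs
          · intro hs
            rw [hstack]
            exact (hs.trans (List.sublist_append_left _ _)).trans
              (List.sublist_append_left _ _)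
        rw [e1, e2, e3]
        have hLlen : L.length ≤ N := by omega
        exact ih L hLlen hnd'.of_append_left x y hxL hyL hxy
      · -- x ∈ L, y = m : both sides true
        apply iff_of_true
        · rw [hstack]
          have hxs : [x] <+ stackSort L ++ stackSort R :=
            List.singleton_sublist.2 (List.mem_append_left _ (mem_stackSort.2 hxL))
          exact hxs.append (List.Sublist.refl [y])
        · refine Or.inr ⟨?_, ?_, hltL x hxL⟩
          · rintro ⟨z, _, hz2, hs⟩
            exact absurd (hub z (hs.mem (by simp))) (not_le.2 hz2)
          · rintro ⟨z, hz1, _, hs⟩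
            exact absurd (hub z (hs.mem (by simp))) (not_le.2 hz1)
      · -- x ∈ L, y ∈ R : both sides true
        apply iff_of_true
        · rw [hstack]
          have hxy2 : [x, y] <+ stackSort L ++ stackSort R :=
            (List.singleton_sublist.2 (mem_stackSort.2 hxL)).append
              (List.singleton_sublist.2 (mem_stackSort.2 hyR))
          exact hxy2.trans (List.sublist_append_left _ _)
        · refine Or.inl ⟨m, hltL x hxL, hltR y hyR, ?_⟩
          rw [hdec]
          exact (List.singleton_sublist.2 hxL).append
            ((List.singleton_sublist.2 hyR).cons₂ m)
    · -- x = m : both sides false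
      apply iff_of_false
      · intro hs
        rw [hstack] at hs
        have hmS : x ∉ stackSort L ++ stackSort R := by
          intro hmem
          rcases List.mem_append.1 hmem with h | h
          · exact hmL (mem_stackSort.1 h)
          · exact hmR (mem_stackSort.1 h)
        rw [List.sublist_append_iff] at hs
        obtain ⟨u, v, he, hu, hv⟩ := hs
        rcases eq_or_ne u [] with rfl | hune
        · rw [List.nil_append] at he
          have hle := hv.length_le
          rw [← he] at hle
          simp at hle
        · obtain ⟨a, u', rfl⟩ := List.exists_cons_of_ne_nil hune
          rw [List.cons_append, List.cons_eq_cons] at he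
          exact hmS (hu.mem (he.1 ▸ List.mem_cons_self))
      · rintro (⟨z, hz1, _, hs⟩ | ⟨_, _, hlt⟩)
        · exact absurd (hub z (hs.mem (by simp))) (not_le.2 hz1)
        · rcases hy' with hyL | rfl | hyR
          · exact absurd (hltL y hyL) (not_lt.2 (le_of_lt hlt))
          · exact hxy rfl
          · exact absurd (hltR y hyR) (not_lt.2 (le_of_lt hlt))
    · -- x ∈ R
      rcases hy' with hyL | rfl | hyR
      · -- x ∈ R, y ∈ L : both sides false
        apply iff_of_false
        · intro hs
          rw [hstack, List.append_assoc] at hs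
          have hs2 := cons_sublist_of_mem_right hndS
            (List.mem_append_left _ (mem_stackSort.2 hxR)) hs
          have hy2 : y ∈ stackSort R ++ [m] := hs2.mem (by simp)
          rcases List.mem_append.1 hy2 with h | h
          · exact hdisj hyL (List.mem_cons_of_mem _ (mem_stackSort.1 h))
          · exact hmL (List.mem_singleton.1 h ▸ hyL)
        · rintro (⟨z, _, _, hs⟩ | ⟨_, hnsep, _⟩)
          · rw [hdec] at hs
            have hxL2 : x ∈ L := (sublist_append_last (l := [x, z]) hnd' hyL hs).mem
              (by simp : x ∈ [x, z, y])
            exact hdisj hxL2 (List.mem_cons_of_mem _ hxR)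
          · apply hnsep
            refine ⟨m, hltL y hyL, hltR x hxR, ?_⟩
            rw [hdec]
            exact (List.singleton_sublist.2 hyL).append
              (((List.singleton_sublist.2 hxR).cons₂ m))
      · -- x ∈ R, y = m : both sides true
        apply iff_of_true
        · rw [hstack]
          have hxs : [x] <+ stackSort L ++ stackSort R :=
            List.singleton_sublist.2 (List.mem_append_right _ (mem_stackSort.2 hxR))
          exact hxs.append (List.Sublist.refl [y])
        · refine Or.inr ⟨?_, ?_, hltR x hxR⟩
          · rintro ⟨z, _, hz2, hs⟩
            exact absurd (hub z (hs.mem (by simp))) (not_le.2 hz2)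
          · rintro ⟨z, hz1, _, hs⟩
            exact absurd (hub z (hs.mem (by simp))) (not_le.2 hz1)
      · -- both in R
        have hxm : x ≠ m := fun h => hmR (h ▸ hxR)
        have hym : y ≠ m := fun h => hmR (h ▸ hyR)
        have e1 : SepB σ x y ↔ SepB R x y := by rw [hdec]; exact sepB_right hnd' hxR hxm
        have e2 : SepB σ y x ↔ SepB R y x := by rw [hdec]; exact sepB_right hnd' hyR hym
        have e3 : [x, y] <+ stackSort σ ↔ [x, y] <+ stackSort R := by
          constructor
          · intro hs
            rw [hstack, List.append_assoc] at hs
            have hs2 := cons_sublist_of_mem_right hndS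
              (List.mem_append_left _ (mem_stackSort.2 hxR)) hs
            exact sublist_append_last (l := [x]) hndS.of_append_right
              (mem_stackSort.2 hyR) hs2
          · intro hs
            rw [hstack, List.append_assoc]
            exact (hs.trans (List.sublist_append_left _ _)).trans
              (List.sublist_append_right _ _)
        rw [e1, e2, e3]
        have hRlen : R.length ≤ N := by omega
        exact ih R hRlen (hnd'.of_append_right.of_cons) x y hxR hyR hxy

lemma get3_sublist {t : List ℕ} {i j k : Fin t.length} (hij : i < j) (hjk : j < k) :
    [t.get i, t.get j, t.get k] <+ t := by
  have hp : ([i, j, k] : List (Fin t.length)).Pairwise (·.val < ·.val) := by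
    have e1 : i.val < j.val := hij
    have e2 : j.val < k.val := hjk
    simp only [List.pairwise_cons, List.mem_cons, List.mem_singleton, List.not_mem_nil]
    refine ⟨?_, ?_, ?_⟩
    · rintro x (rfl | rfl | h) <;> first | omega | exact absurd h (by simp)
    · rintro x (rfl | h) <;> first | omega | exact absurd h (by simp)
    · exact ⟨fun a h => absurd h (by simp), List.Pairwise.nil⟩
  simpa using List.map_getElem_sublist hp

lemma get5_sublist {t : List ℕ} {i1 i2 i3 i4 i5 : Fin t.length}
    (h12 : i1 < i2) (h23 : i2 < i3) (h34 : i3 < i4) (h45 : i4 < i5) :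
    [t.get i1, t.get i2, t.get i3, t.get i4, t.get i5] <+ t := by
  have hp : ([i1, i2, i3, i4, i5] : List (Fin t.length)).Pairwise (·.val < ·.val) := by
    have e1 : i1.val < i2.val := h12
    have e2 : i2.val < i3.val := h23
    have e3 : i3.val < i4.val := h34
    have e4 : i4.val < i5.val := h45
    simp only [List.pairwise_cons, List.mem_cons, List.mem_singleton, List.not_mem_nil]
    refine ⟨?_, ?_, ?_, ?_, ?_⟩
    · rintro x (rfl | rfl | rfl | rfl | h) <;> first | omega | exact absurd h (by simp)
    · rintro x (rfl | rfl | rfl | h) <;> first | omega | exact absurd h (by simp)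
    · rintro x (rfl | rfl | h) <;> first | omega | exact absurd h (by simp)
    · rintro x (rfl | h) <;> first | omega | exact absurd h (by simp)
    · exact ⟨fun a h => absurd h (by simp), List.Pairwise.nil⟩
  simpa using List.map_getElem_sublist hp

lemma contains321_iff {t : List ℕ} :
    Contains [3, 2, 1] t ↔ ∃ a b c : ℕ, b < a ∧ c < b ∧ [a, b, c] <+ t := by
  constructor
  · rintro ⟨f, hmono, hiff⟩
    refine ⟨t.get (f ⟨0, by decide⟩), t.get (f ⟨1, by decide⟩), t.get (f ⟨2, by decide⟩),
      ?_, ?_, ?_⟩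
    · exact (hiff ⟨1, by decide⟩ ⟨0, by decide⟩).1 (by decide)
    · exact (hiff ⟨2, by decide⟩ ⟨1, by decide⟩).1 (by decide)
    · exact get3_sublist (hmono (by decide)) (hmono (by decide))
  · rintro ⟨a, b, c, hba, hcb, hs⟩
    rw [List.sublist_iff_exists_fin_orderEmbedding_get_eq] at hs
    obtain ⟨e, he⟩ := hs
    refine ⟨e, e.strictMono, fun i j => ?_⟩
    fin_cases i <;> fin_cases j <;> simp only [← he] <;> simp <;> omega

lemma contains34251_iff {t : List ℕ} :
    Contains [3, 4, 2, 5, 1] t ↔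
      ∃ a z b w c : ℕ, c < b ∧ b < a ∧ a < z ∧ z < w ∧ [a, z, b, w, c] <+ t := by
  constructor
  · rintro ⟨f, hmono, hiff⟩
    refine ⟨t.get (f ⟨0, by decide⟩), t.get (f ⟨1, by decide⟩), t.get (f ⟨2, by decide⟩),
      t.get (f ⟨3, by decide⟩), t.get (f ⟨4, by decide⟩), ?_, ?_, ?_, ?_, ?_⟩
    · exact (hiff ⟨4, by decide⟩ ⟨2, by decide⟩).1 (by decide)
    · exact (hiff ⟨2, by decide⟩ ⟨0, by decide⟩).1 (by decide)
    · exact (hiff ⟨0, by decide⟩ ⟨1, by decide⟩).1 (by decide)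
    · exact (hiff ⟨1, by decide⟩ ⟨3, by decide⟩).1 (by decide)
    · exact get5_sublist (hmono (by decide)) (hmono (by decide)) (hmono (by decide))
        (hmono (by decide))
  · rintro ⟨a, z, b, w, c, h1, h2, h3, h4, hs⟩
    rw [List.sublist_iff_exists_fin_orderEmbedding_get_eq] at hs
    obtain ⟨e, he⟩ := hs
    refine ⟨e, e.strictMono, fun i j => ?_⟩
    fin_cases i <;> fin_cases j <;> simp only [← he] <;> simp [List.get] <;> omega

lemma contains35241_iff {t : List ℕ} :
    Contains [3, 5, 2, 4, 1] t ↔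
      ∃ a z b w c : ℕ, c < b ∧ b < a ∧ a < w ∧ w < z ∧ [a, z, b, w, c] <+ t := by
  constructor
  · rintro ⟨f, hmono, hiff⟩
    refine ⟨t.get (f ⟨0, by decide⟩), t.get (f ⟨1, by decide⟩), t.get (f ⟨2, by decide⟩),
      t.get (f ⟨3, by decide⟩), t.get (f ⟨4, by decide⟩), ?_, ?_, ?_, ?_, ?_⟩
    · exact (hiff ⟨4, by decide⟩ ⟨2, by decide⟩).1 (by decide)
    · exact (hiff ⟨2, by decide⟩ ⟨0, by decide⟩).1 (by decide)
    · exact (hiff ⟨0, by decide⟩ ⟨3, by decide⟩).1 (by decide)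
    · exact (hiff ⟨3, by decide⟩ ⟨1, by decide⟩).1 (by decide)
    · exact get5_sublist (hmono (by decide)) (hmono (by decide)) (hmono (by decide))
        (hmono (by decide))
  · rintro ⟨a, z, b, w, c, h1, h2, h3, h4, hs⟩
    rw [List.sublist_iff_exists_fin_orderEmbedding_get_eq] at hs
    obtain ⟨e, he⟩ := hs
    refine ⟨e, e.strictMono, fun i j => ?_⟩
    fin_cases i <;> fin_cases j <;> simp only [← he] <;> simp [List.get] <;> omega

lemma contains45231_iff {t : List ℕ} :
    Contains [4, 5, 2, 3, 1] t ↔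
      ∃ a z b w c : ℕ, c < b ∧ b < w ∧ w < a ∧ a < z ∧ [a, z, b, w, c] <+ t := by
  constructor
  · rintro ⟨f, hmono, hiff⟩
    refine ⟨t.get (f ⟨0, by decide⟩), t.get (f ⟨1, by decide⟩), t.get (f ⟨2, by decide⟩),
      t.get (f ⟨3, by decide⟩), t.get (f ⟨4, by decide⟩), ?_, ?_, ?_, ?_, ?_⟩
    · exact (hiff ⟨4, by decide⟩ ⟨2, by decide⟩).1 (by decide)
    · exact (hiff ⟨2, by decide⟩ ⟨3, by decide⟩).1 (by decide)
    · exact (hiff ⟨3, by decide⟩ ⟨0, by decide⟩).1 (by decide)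
    · exact (hiff ⟨0, by decide⟩ ⟨1, by decide⟩).1 (by decide)
    · exact get5_sublist (hmono (by decide)) (hmono (by decide)) (hmono (by decide))
        (hmono (by decide))
  · rintro ⟨a, z, b, w, c, h1, h2, h3, h4, hs⟩
    rw [List.sublist_iff_exists_fin_orderEmbedding_get_eq] at hs
    obtain ⟨e, he⟩ := hs
    refine ⟨e, e.strictMono, fun i j => ?_⟩
    fin_cases i <;> fin_cases j <;> simp only [← he] <;> simp [List.get] <;> omega

lemma T1_iff_T2 {σ : List ℕ} (hnd : σ.Nodup) :
    (∃ a b c : ℕ, b < a ∧ c < b ∧ [a, b, c] <+ stackSort σ) ↔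
    (∃ a z b w c : ℕ, c < b ∧ b < a ∧ a < z ∧ b < w ∧ [a, z, b, w, c] <+ σ) := by
  constructor
  · rintro ⟨a, b, c, hba, hcb, hs⟩
    have hamem : a ∈ σ := mem_stackSort.1 (hs.mem (by simp))
    have hbmem : b ∈ σ := mem_stackSort.1 (hs.mem (by simp))
    have hcmem : c ∈ σ := mem_stackSort.1 (hs.mem (by simp))
    have hab : [a, b] <+ stackSort σ := (List.sublist_append_left [a, b] [c]).trans hs
    have hbc : [b, c] <+ stackSort σ := (List.sublist_cons_self a [b, c]).trans hs
    have h1 := (before_aux σ.length σ le_rfl hnd a b hamem hbmem (by omega)).1 hab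
    have h2 := (before_aux σ.length σ le_rfl hnd b c hbmem hcmem (by omega)).1 hbc
    have hsep1 : SepB σ a b := by
      rcases h1 with h | ⟨_, _, h⟩
      · exact h
      · omega
    have hsep2 : SepB σ b c := by
      rcases h2 with h | ⟨_, _, h⟩
      · exact h
      · omega
    obtain ⟨z, haz, hbz, hsz⟩ := hsep1
    obtain ⟨w, hbw, hcw, hsw⟩ := hsep2
    refine ⟨a, z, b, w, c, hcb, hba, haz, hbw, ?_⟩
    exact sublist_splice (l₁ := [a, z]) (l₂ := [w, c]) hnd
      (by simp; omega) (by simp; omega) hsz hsw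
  · rintro ⟨a, z, b, w, c, hcb, hba, haz, hbw, hs⟩
    have hamem : a ∈ σ := hs.mem (by simp)
    have hbmem : b ∈ σ := hs.mem (by simp)
    have hcmem : c ∈ σ := hs.mem (by simp)
    have hsz : [a, z, b] <+ σ := (List.sublist_append_left [a, z, b] [w, c]).trans hs
    have hsw : [b, w, c] <+ σ :=
      ((List.sublist_cons_self z [b, w, c]).trans
        (List.sublist_cons_self a (z :: [b, w, c]))).trans hs
    have h1 : [a, b] <+ stackSort σ :=
      (before_aux σ.length σ le_rfl hnd a b hamem hbmem (by omega)).2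
        (Or.inl ⟨z, haz, by omega, hsz⟩)
    have h2 : [b, c] <+ stackSort σ :=
      (before_aux σ.length σ le_rfl hnd b c hbmem hcmem (by omega)).2
        (Or.inl ⟨w, hbw, by omega, hsw⟩)
    refine ⟨a, b, c, hba, hcb, ?_⟩
    exact sublist_splice (l₁ := [a]) (l₂ := [c]) (stackSort_nodup hnd)
      (by simp; omega) (by simp; omega) h1 h2

/-- `s(σ)` avoids 321 iff `σ` avoids 34251, 35241 and 45231:
`s⁻¹(Av(321)) = Av(34251, 35241, 45231)`. -/
theorem stmt4 (n : ℕ) (σ : List ℕ) (hσ : σ.Perm (List.range' 1 n)) :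
    Avoids (stackSort σ) [3, 2, 1] ↔
      Avoids σ [3, 4, 2, 5, 1] ∧ Avoids σ [3, 5, 2, 4, 1] ∧ Avoids σ [4, 5, 2, 3, 1] := by
  have hnd : σ.Nodup := hσ.nodup_iff.2 (List.nodup_range' (s := 1) (n := n) 1 (by omega))
  unfold Avoids
  rw [contains321_iff, T1_iff_T2 hnd, contains34251_iff, contains35241_iff, contains45231_iff]
  constructor
  · intro h
    refine ⟨fun hc => h ?_, fun hc => h ?_, fun hc => h ?_⟩
    · obtain ⟨a, z, b, w, c, h1, h2, h3, h4, hs⟩ := hc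
      exact ⟨a, z, b, w, c, h1, h2, h3, by omega, hs⟩
    · obtain ⟨a, z, b, w, c, h1, h2, h3, h4, hs⟩ := hc
      exact ⟨a, z, b, w, c, h1, h2, by omega, by omega, hs⟩
    · obtain ⟨a, z, b, w, c, h1, h2, h3, h4, hs⟩ := hc
      exact ⟨a, z, b, w, c, h1, by omega, by omega, by omega, hs⟩
  · rintro ⟨h1, h2, h3⟩ ⟨a, z, b, w, c, hcb, hba, haz, hbw, hs⟩
    have hnd5 : ([a, z, b, w, c] : List ℕ).Nodup := hnd.sublist hs
    have hwa : w ≠ a := by intro h; rw [h] at hnd5; simp at hnd5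
    have hwz : w ≠ z := by intro h; rw [h] at hnd5; simp at hnd5
    rcases lt_trichotomy w a with h | h | h
    · exact h3 ⟨a, z, b, w, c, hcb, hbw, h, haz, hs⟩
    · exact hwa h
    · rcases lt_trichotomy w z with h' | h' | h'
      · exact h2 ⟨a, z, b, w, c, hcb, hba, h, h', hs⟩
      · exact hwz h'
      · exact h1 ⟨a, z, b, w, c, hcb, hba, haz, h', hs⟩
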